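/- Let A ∈ ℂ^{m×n} (m ≤ n) have full rank m, let e ∈ ℂ^m, 0 ≤ η < ‖e‖₂, and u = (u_i) weights with u_i ≥ 1. Then the quantity T = min{ ‖d‖_{1,u} : d ∈ ℂⁿ, ‖A d − e‖₂ ≤ η } satisfies T ≤ (√(∑_{i=1}^n u_i²) / σ_min(A*)) (‖e‖₂ − η), where σ_min(A*) is the smallest singular value of A*. -/

import Mathlib

set_option maxHeartbeats 1000000

open Finset

lemma dot_star_self_re {k : ℕ} (w : Fin k → ℂ) :
    (dotProduct (star w) w).re = ∑ j, ‖w j‖ ^ 2 := by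
  rw [dotProduct, Complex.re_sum]
  refine Finset.sum_congr rfl fun j _ => ?_
  have h : star (w j) * w j = ((‖w j‖ : ℂ)) ^ 2 := RCLike.conj_mul (w j)
  rw [Pi.star_apply, h]
  norm_cast

lemma cs_real {k : ℕ} (f g : Fin k → ℝ) (hf : ∀ i, 0 ≤ f i) (hg : ∀ i, 0 ≤ g i) :
    ∑ i, f i * g i ≤ Real.sqrt (∑ i, f i ^ 2) * Real.sqrt (∑ i, g i ^ 2) := by
  have h := Finset.sum_mul_sq_le_sq_mul_sq Finset.univ f g
  have h1 : 0 ≤ ∑ i, f i * g i := Finset.sum_nonneg fun i _ => mul_nonneg (hf i) (hg i)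
  calc ∑ i, f i * g i = Real.sqrt ((∑ i, f i * g i) ^ 2) := (Real.sqrt_sq h1).symm
    _ ≤ Real.sqrt ((∑ i, f i ^ 2) * ∑ i, g i ^ 2) := Real.sqrt_le_sqrt h
    _ = _ := Real.sqrt_mul (Finset.sum_nonneg fun i _ => sq_nonneg _) _

theorem tail_error_bound (m n : ℕ) (hmn : m ≤ n)
    (A : Matrix (Fin m) (Fin n) ℂ) (hrank : A.rank = m)
    (u : Fin n → ℝ) (hu : ∀ i, 1 ≤ u i)
    (σ : ℝ) (hσ : 0 < σ)
    (hσmin : ∀ x : Fin m → ℂ,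
      σ * Real.sqrt (∑ j, ‖x j‖ ^ 2) ≤ Real.sqrt (∑ i, ‖A.conjTranspose.mulVec x i‖ ^ 2))
    (e : Fin m → ℂ) (η : ℝ) (hη : 0 ≤ η)
    (hηe : η < Real.sqrt (∑ j, ‖e j‖ ^ 2)) :
    ∃ d : Fin n → ℂ,
      Real.sqrt (∑ j, ‖A.mulVec d j - e j‖ ^ 2) ≤ η ∧
      (∑ i, u i * ‖d i‖)
        ≤ Real.sqrt (∑ i, (u i) ^ 2) / σ
            * (Real.sqrt (∑ j, ‖e j‖ ^ 2) - η) := by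
  classical
  set E := Real.sqrt (∑ j, ‖e j‖ ^ 2) with hEdef
  have hE : 0 < E := lt_of_le_of_lt hη hηe
  -- key identity: for any y, (star y ⬝ᵥ (A * Aᴴ) *ᵥ y).re = ∑ ‖(Aᴴ *ᵥ y) i‖²
  have key : ∀ y : Fin m → ℂ,
      (dotProduct (star y) ((A * A.conjTranspose).mulVec y)).re
        = ∑ i, ‖A.conjTranspose.mulVec y i‖ ^ 2 := by
    intro y
    have h1 : (A * A.conjTranspose).mulVec y = A.mulVec (A.conjTranspose.mulVec y) :=
      (Matrix.mulVec_mulVec _ _ _).symm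
    rw [h1, Matrix.dotProduct_mulVec,
      show Matrix.vecMul (star y) A = star (A.conjTranspose.mulVec y) by
        rw [Matrix.star_mulVec, Matrix.conjTranspose_conjTranspose]]
    exact dot_star_self_re _
  -- injectivity of (A * Aᴴ).mulVecLin
  have hinj : Function.Injective (A * A.conjTranspose).mulVecLin := by
    rw [← LinearMap.ker_eq_bot, LinearMap.ker_eq_bot']
    intro y hy
    have h0 : (∑ i, ‖A.conjTranspose.mulVec y i‖ ^ 2) = 0 := by
      rw [← key y]
      rw [Matrix.mulVecLin_apply] at hy
      rw [hy]; simp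
    have h2 := hσmin y
    rw [h0, Real.sqrt_zero] at h2
    have h3 : Real.sqrt (∑ j, ‖y j‖ ^ 2) ≤ 0 := by
      nlinarith [Real.sqrt_nonneg (∑ j, ‖y j‖ ^ 2)]
    have h4 : (∑ j, ‖y j‖ ^ 2) = 0 := by
      have := Real.sqrt_eq_zero (Finset.sum_nonneg fun i _ => sq_nonneg _) |>.mp
        (le_antisymm h3 (Real.sqrt_nonneg _))
      exact this
    funext j
    have := Finset.sum_eq_zero_iff_of_nonneg (fun i _ => sq_nonneg ‖y i‖) |>.mp h4 j (mem_univ j)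
    have : ‖y j‖ = 0 := by nlinarith [norm_nonneg (y j)]
    simpa using this
  have hsurj : Function.Surjective (A * A.conjTranspose).mulVecLin :=
    LinearMap.injective_iff_surjective.mp hinj
  obtain ⟨x, hx⟩ := hsurj e
  rw [Matrix.mulVecLin_apply] at hx
  set w := A.conjTranspose.mulVec x with hwdef
  have hAw : A.mulVec w = e := by rw [hwdef, Matrix.mulVec_mulVec]; exact hx
  set W := Real.sqrt (∑ i, ‖w i‖ ^ 2) with hWdef
  set X := Real.sqrt (∑ j, ‖x j‖ ^ 2) with hXdef
  have hW0 : 0 ≤ W := Real.sqrt_nonneg _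
  have hX0 : 0 ≤ X := Real.sqrt_nonneg _
  have hW2 : W ^ 2 = ∑ i, ‖w i‖ ^ 2 :=
    Real.sq_sqrt (Finset.sum_nonneg fun i _ => sq_nonneg _)
  -- ‖w‖² = Re(star x ⬝ᵥ e) ≤ X * E
  have h1 : ∑ i, ‖w i‖ ^ 2 = (dotProduct (star x) e).re := by
    rw [← hx]; exact (key x).symm
  have h2 : (dotProduct (star x) e).re ≤ X * E := by
    have hre : (dotProduct (star x) e).re ≤ ∑ j, ‖x j‖ * ‖e j‖ := by
      rw [dotProduct, Complex.re_sum]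
      refine Finset.sum_le_sum fun j _ => ?_
      calc (star x j * e j).re ≤ ‖star x j * e j‖ := Complex.re_le_norm _
        _ = ‖x j‖ * ‖e j‖ := by rw [norm_mul, Pi.star_apply, norm_star]
    exact hre.trans (cs_real _ _ (fun i => norm_nonneg _) (fun i => norm_nonneg _))
  have h3 : σ * X ≤ W := hσmin x
  have hW2le : W ^ 2 ≤ X * E := by rw [hW2, h1]; exact h2
  have h5 : σ * W ^ 2 ≤ W * E := by nlinarith [mul_le_mul_of_nonneg_right h3 hE.le]
  have hσW : σ * W ≤ E := by
    rcases eq_or_lt_of_le hW0 with h | h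
    · rw [← h, mul_zero]; exact hE.le
    · have h6 : (σ * W) * W ≤ E * W := by nlinarith [h5]
      exact le_of_mul_le_mul_right h6 h
  -- define d
  set t : ℝ := (E - η) / E with htdef
  have ht0 : 0 ≤ t := div_nonneg (by linarith) hE.le
  have htE : t * E = E - η := div_mul_cancel₀ _ (ne_of_gt hE)
  refine ⟨fun i => (t : ℂ) * w i, ?_, ?_⟩
  · -- feasibility
    have hAd : A.mulVec (fun i => (t : ℂ) * w i) = fun j => (t : ℂ) * e j := by
      funext j
      have : (fun i => (t : ℂ) * w i) = (t : ℂ) • w := by funext i; simp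
      rw [this, Matrix.mulVec_smul, hAw]; simp
    have hterm : ∀ j, ‖A.mulVec (fun i => (t : ℂ) * w i) j - e j‖ ^ 2
        = (η / E) ^ 2 * ‖e j‖ ^ 2 := by
      intro j
      rw [hAd]
      have h6 : (t : ℂ) * e j - e j = ((t - 1 : ℝ) : ℂ) * e j := by push_cast; ring
      rw [h6, norm_mul, Complex.norm_real, Real.norm_eq_abs, mul_pow]
      congr 1
      rw [show t - 1 = -(η / E) by rw [htdef]; field_simp; ring, abs_neg, sq_abs]
    have hE2 : E ^ 2 = ∑ j, ‖e j‖ ^ 2 :=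
      Real.sq_sqrt (Finset.sum_nonneg fun i _ => sq_nonneg _)
    have hsum2 : ∑ j, ‖A.mulVec (fun i => (t : ℂ) * w i) j - e j‖ ^ 2 = η ^ 2 := by
      rw [Finset.sum_congr rfl (fun j _ => hterm j), ← Finset.mul_sum, ← hE2]
      field_simp
    rw [hsum2, Real.sqrt_sq hη]
  · -- norm bound
    have hcs : ∑ i, u i * ‖w i‖ ≤ Real.sqrt (∑ i, (u i) ^ 2) * W :=
      cs_real u (fun i => ‖w i‖) (fun i => le_trans zero_le_one (hu i)) (fun i => norm_nonneg _)
    have hsum : ∑ i, u i * ‖(t : ℂ) * w i‖ = t * ∑ i, u i * ‖w i‖ := by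
      rw [Finset.mul_sum]
      refine Finset.sum_congr rfl fun i _ => ?_
      rw [norm_mul, Complex.norm_real, Real.norm_eq_abs, abs_of_nonneg ht0]; ring
    rw [hsum]
    set U := Real.sqrt (∑ i, (u i) ^ 2) with hUdef
    have hU0 : 0 ≤ U := Real.sqrt_nonneg _
    calc t * ∑ i, u i * ‖w i‖ ≤ t * (U * W) :=
          mul_le_mul_of_nonneg_left hcs ht0
      _ ≤ U / σ * (E - η) := by
          have h7 : U / σ * (E - η) = U * (E - η) / σ := by ring
          rw [h7, le_div_iff₀ hσ]
          nlinarith [mul_le_mul_of_nonneg_left hσW (mul_nonneg ht0 hU0), htE, hU0]
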